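/- arXiv:2405.04150 — 3 statements merged into one kernel-verified Lean document; each statement's English description precedes it below -/
import Mathlib

section
/- Let f : ℝ^d → ℝ be locally Lipschitz and subdifferentially polynomially bounded (SPB) with parameters R₁, R₂, m. Then for all x, y ∈ ℝ^d one has |f(x) − f(y)| ≤ (2^{m−1} R₁ ‖x‖^m + 2^{m−1} R₁ ‖y − x‖^m + R₂) ‖x − y‖. -/
open MeasureTheory Filter Set
open scoped InnerProductSpace ENNReal Topology Real NNReal

/-- The Clarke directional derivative
`f°(x; v) = limsup_{x' → x, t ↓ 0} (f (x' + t v) - f x') / t`. -/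
noncomputable def clarkeDeriv {d : ℕ} (f : EuclideanSpace ℝ (Fin d) → ℝ)
    (x v : EuclideanSpace ℝ (Fin d)) : ℝ :=
  Filter.limsup (fun p : EuclideanSpace ℝ (Fin d) × ℝ => (f (p.1 + p.2 • v) - f p.1) / p.2)
    ((𝓝 x) ×ˢ (𝓝[>] (0 : ℝ)))

/-- The Clarke subdifferential `∂_C f(x) = {s : ⟪s, v⟫ ≤ f°(x; v) ∀ v}`. -/
def clarkeSubdiff {d : ℕ} (f : EuclideanSpace ℝ (Fin d) → ℝ) (x : EuclideanSpace ℝ (Fin d)) :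
    Set (EuclideanSpace ℝ (Fin d)) :=
  {s | ∀ v, ⟪s, v⟫_ℝ ≤ clarkeDeriv f x v}

/-- The Goldstein δ-subdifferential `∂_G^δ f(x) = conv (⋃_{y ∈ B̄(x, δ)} ∂_C f(y))`. -/
def goldsteinSubdiff {d : ℕ} (f : EuclideanSpace ℝ (Fin d) → ℝ) (δ : ℝ)
    (x : EuclideanSpace ℝ (Fin d)) : Set (EuclideanSpace ℝ (Fin d)) :=
  convexHull ℝ (⋃ y ∈ Metric.closedBall x δ, clarkeSubdiff f y)

/-- `f` is subdifferentially polynomially bounded with parameters `R1, R2, m`. -/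
def IsSPB {d : ℕ} (f : EuclideanSpace ℝ (Fin d) → ℝ) (R1 R2 : ℝ) (m : ℕ) : Prop :=
  LocallyLipschitz f ∧ 0 ≤ R1 ∧ 0 < R2 ∧ (R1 = 0 ↔ m = 0) ∧
    ∀ x : EuclideanSpace ℝ (Fin d), ∀ ζ ∈ clarkeSubdiff f x, ‖ζ‖ ≤ R1 * ‖x‖ ^ m + R2

section Aux

variable {d : ℕ} {f : EuclideanSpace ℝ (Fin d) → ℝ}

local notation "E" => EuclideanSpace ℝ (Fin d)

lemma exists_abs_bound (hf : LocallyLipschitz f) (x v : E) :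
    ∃ K : ℝ, 0 ≤ K ∧ ∀ᶠ p in (𝓝 x ×ˢ 𝓝[>] (0:ℝ)),
      |(f (p.1 + p.2 • v) - f p.1) / p.2| ≤ K := by
  obtain ⟨K, t, ht, hK⟩ := hf x
  obtain ⟨ε, hε, hball⟩ := Metric.mem_nhds_iff.1 ht
  refine ⟨K * ‖v‖, by positivity, ?_⟩
  have h1 : Metric.ball x (ε/2) ∈ 𝓝 x := Metric.ball_mem_nhds x (by linarith)
  have h2 : Ioo (0:ℝ) (ε/(2*(‖v‖+1))) ∈ 𝓝[>] (0:ℝ) :=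
    Ioo_mem_nhdsGT_of_mem ⟨le_refl 0, by positivity⟩
  filter_upwards [Filter.prod_mem_prod h1 h2] with p hp
  have hp1 : dist p.1 x < ε/2 := hp.1
  have hp2 : 0 < p.2 := hp.2.1
  have hp3 : p.2 < ε/(2*(‖v‖+1)) := hp.2.2
  have hmem1 : p.1 ∈ t := hball (by simp [Metric.mem_ball]; linarith)
  have hsv : ‖p.2 • v‖ = p.2 * ‖v‖ := by
    rw [norm_smul, Real.norm_eq_abs, abs_of_pos hp2]
  have hsv' : p.2 * ‖v‖ < ε/2 := by
    calc p.2 * ‖v‖ ≤ p.2 * (‖v‖ + 1) := by nlinarith [norm_nonneg v]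
    _ < ε/(2*(‖v‖+1)) * (‖v‖+1) := by
        have : (0:ℝ) < ‖v‖ + 1 := by positivity
        exact mul_lt_mul_of_pos_right hp3 this
    _ = ε/2 := by field_simp
  have hmem2 : p.1 + p.2 • v ∈ t := by
    apply hball
    have : dist (p.1 + p.2 • v) x ≤ ‖p.2 • v‖ + dist p.1 x := by
      calc dist (p.1 + p.2 • v) x ≤ dist (p.1 + p.2 • v) p.1 + dist p.1 x := dist_triangle _ _ _
      _ = ‖p.2 • v‖ + dist p.1 x := by rw [dist_eq_norm]; simp
    rw [Metric.mem_ball]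
    calc dist (p.1 + p.2 • v) x ≤ ‖p.2 • v‖ + dist p.1 x := this
    _ < ε/2 + ε/2 := by rw [hsv]; exact add_lt_add hsv' hp1
    _ = ε := by ring
  have hlip : |f (p.1 + p.2 • v) - f p.1| ≤ K * (p.2 * ‖v‖) := by
    have h := hK.dist_le_mul _ hmem2 _ hmem1
    rw [Real.dist_eq] at h
    refine h.trans ?_
    have : dist (p.1 + p.2 • v) p.1 = ‖p.2 • v‖ := by rw [dist_eq_norm]; simp
    rw [this, hsv]
  rw [abs_div, abs_of_pos hp2, div_le_iff₀ hp2]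
  calc |f (p.1 + p.2 • v) - f p.1| ≤ K * (p.2 * ‖v‖) := hlip
  _ = K * ‖v‖ * p.2 := by ring


lemma bdd_of_abs {α : Type*} {l : Filter α} {u : α → ℝ} {K : ℝ}
    (h : ∀ᶠ a in l, |u a| ≤ K) :
    IsBoundedUnder (· ≤ ·) l u ∧ IsBoundedUnder (· ≥ ·) l u :=
  ⟨⟨K, eventually_map.2 (h.mono fun a ha => (abs_le.1 ha).2)⟩,
   ⟨-K, eventually_map.2 (h.mono fun a ha => (abs_le.1 ha).1)⟩⟩

lemma clarkeDeriv_zero (x : E) : clarkeDeriv f x (0 : E) = 0 := by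
  have h : (fun p : E × ℝ => (f (p.1 + p.2 • (0:E)) - f p.1) / p.2) = fun _ => (0:ℝ) := by
    funext p; simp
  rw [clarkeDeriv, h, limsup_const]

lemma tendsto_phi (x v : E) :
    Tendsto (fun p : E × ℝ => (p.1 + p.2 • v, p.2)) (𝓝 x ×ˢ 𝓝[>] (0:ℝ))
      (𝓝 x ×ˢ 𝓝[>] (0:ℝ)) := by
  refine Tendsto.prodMk ?_ tendsto_snd
  have h1 : Tendsto (fun p : E × ℝ => p.1) (𝓝 x ×ˢ 𝓝[>] (0:ℝ)) (𝓝 x) := tendsto_fst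
  have h2 : Tendsto (fun p : E × ℝ => p.2) (𝓝 x ×ˢ 𝓝[>] (0:ℝ)) (𝓝 (0:ℝ)) :=
    tendsto_snd.mono_right nhdsWithin_le_nhds
  simpa using h1.add (h2.smul_const v)

lemma clarkeDeriv_add_le (hf : LocallyLipschitz f) (x v w : E) :
    clarkeDeriv f x (v + w) ≤ clarkeDeriv f x v + clarkeDeriv f x w := by
  set L := 𝓝 x ×ˢ 𝓝[>] (0:ℝ) with hL
  haveI : L.NeBot := by rw [hL]; infer_instance
  obtain ⟨Kv, _, hKv⟩ := exists_abs_bound hf x v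
  obtain ⟨Kw, _, hKw⟩ := exists_abs_bound hf x w
  set uv : E × ℝ → ℝ := fun p => (f (p.1 + p.2 • v) - f p.1) / p.2 with huv
  set uw : E × ℝ → ℝ := fun p => (f (p.1 + p.2 • w) - f p.1) / p.2 with huw
  set φ : E × ℝ → E × ℝ := fun p => (p.1 + p.2 • w, p.2) with hφ
  have hphi : Tendsto φ L L := tendsto_phi x w
  have hKvφ : ∀ᶠ p in L, |uv (φ p)| ≤ Kv := hphi.eventually hKv
  have hid : (fun p : E × ℝ => (f (p.1 + p.2 • (v + w)) - f p.1) / p.2)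
      = (uv ∘ φ) + uw := by
    funext p
    simp only [Pi.add_apply, Function.comp_apply, huv, huw, hφ]
    rw [← add_div, sub_add_sub_cancel, smul_add, add_assoc, add_comm (p.2 • v)]
  have heq : clarkeDeriv f x (v + w) = limsup ((uv ∘ φ) + uw) L := by
    rw [clarkeDeriv, hid]
  have h1 := (bdd_of_abs hKvφ).1
  have h2 := (bdd_of_abs hKvφ).2
  have h3 := (bdd_of_abs hKw).1
  have h4 := (bdd_of_abs hKw).2
  have hadd : limsup ((uv ∘ φ) + uw) L ≤ limsup (uv ∘ φ) L + limsup uw L :=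
    limsup_add_le h2 h1 h4.isCoboundedUnder_le h3
  have hcob : IsCoboundedUnder (· ≤ ·) (map φ L) uv := by
    show IsCobounded _ (map uv (map φ L))
    rw [map_map]
    exact h2.isCoboundedUnder_le
  have hcomp : limsup (uv ∘ φ) L ≤ clarkeDeriv f x v := by
    rw [limsup_comp uv φ L]
    exact limsup_le_limsup_of_le hphi hcob (bdd_of_abs hKv).1
  rw [heq]
  exact hadd.trans (add_le_add hcomp le_rfl)


lemma clarkeDeriv_smul (hf : LocallyLipschitz f) (x v : E) {c : ℝ} (hc : 0 < c) :
    clarkeDeriv f x (c • v) = c * clarkeDeriv f x v := by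
  set L := 𝓝 x ×ˢ 𝓝[>] (0:ℝ) with hL
  haveI : L.NeBot := by rw [hL]; infer_instance
  set u : E × ℝ → ℝ := fun p => (f (p.1 + p.2 • v) - f p.1) / p.2 with hu
  set ψ : E × ℝ → E × ℝ := fun p => (p.1, c * p.2) with hψ
  have hmap : map ψ L = L := by
    have hψeq : ψ = Prod.map id (fun t : ℝ => c * t) := rfl
    rw [hψeq, hL, ← Filter.prod_map_right]
    congr 1
    have h := (Homeomorph.mulLeft₀ c hc.ne').isEmbedding.map_nhdsWithin_eq (Ioi (0:ℝ)) 0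
    have himg : (fun t : ℝ => c * t) '' Ioi 0 = Ioi 0 := by
      ext y
      constructor
      · rintro ⟨z, hz, rfl⟩; exact mul_pos hc hz
      · intro hy; exact ⟨y / c, div_pos hy hc, by field_simp⟩
    simpa [himg] using h
  obtain ⟨K, hK0, hK⟩ := exists_abs_bound hf x v
  have hψt : Tendsto ψ L L := hmap.le
  have hKψ : ∀ᶠ p in L, |u (ψ p)| ≤ K := hψt.eventually hK
  have hid : (fun p : E × ℝ => (f (p.1 + p.2 • (c • v)) - f p.1) / p.2)
      = fun p => c * u (ψ p) := by
    funext p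
    simp only [hu, hψ]
    rw [smul_smul, mul_comm p.2 c, ← mul_div_assoc, mul_div_mul_left _ _ hc.ne']
  rw [clarkeDeriv, hid]
  have g : ℝ ≃o ℝ := OrderIso.mulLeft₀ c hc
  have hgo := OrderIso.limsup_apply (f := L) (u := u ∘ ψ) (OrderIso.mulLeft₀ c hc)
    (bdd_of_abs hKψ).1 (bdd_of_abs hKψ).2.isCoboundedUnder_le
    ?_ ?_
  · have : limsup (u ∘ ψ) L = clarkeDeriv f x v := by
      rw [limsup_comp, hmap]
      rw [clarkeDeriv, hu, hL]
    rw [← this]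
    exact hgo.symm
  · refine ⟨c * K, eventually_map.2 (hKψ.mono fun p hp => ?_)⟩
    simp only [OrderIso.mulLeft₀_apply, Function.comp_apply]
    exact mul_le_mul_of_nonneg_left (abs_le.1 hp).2 hc.le
  · refine (Filter.IsBoundedUnder.isCoboundedUnder_le ?_)
    refine ⟨c * (-K), eventually_map.2 (hKψ.mono fun p hp => ?_)⟩
    simp only [OrderIso.mulLeft₀_apply, Function.comp_apply]
    exact mul_le_mul_of_nonneg_left (abs_le.1 hp).1 hc.le


lemma clarkeDeriv_le_norm {R1 R2 : ℝ} {m : ℕ} (hf : IsSPB f R1 R2 m) (z v : E) :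
    clarkeDeriv f z v ≤ (R1 * ‖z‖ ^ m + R2) * ‖v‖ := by
  have hbd : 0 ≤ R1 * ‖z‖ ^ m + R2 := by
    have := hf.2.1; have := hf.2.2.1; positivity
  by_cases hv : v = (0 : E)
  · rw [hv, clarkeDeriv_zero, norm_zero, mul_zero]
  set N : E → ℝ := clarkeDeriv f z with hN
  have N_hom : ∀ c : ℝ, 0 < c → ∀ w : E, N (c • w) = c * N w :=
    fun c hc w => clarkeDeriv_smul hf.1 z w hc
  have N_add : ∀ v w : E, N (v + w) ≤ N v + N w :=
    fun v w => clarkeDeriv_add_le hf.1 z v w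
  have hNneg : 0 ≤ N v + N (-v) := by
    have h0 : N (v + -v) ≤ N v + N (-v) := N_add v (-v)
    rw [add_neg_cancel] at h0
    have : N (0 : E) = 0 := clarkeDeriv_zero z
    linarith [this ▸ h0]
  set f0 : EuclideanSpace ℝ (Fin d) →ₗ.[ℝ] ℝ := LinearPMap.mkSpanSingleton v (N v) hv with hf0
  have hf0le : ∀ yy : f0.domain, f0 yy ≤ N yy := by
    rintro ⟨yv, hyv⟩
    have hyv' : yv ∈ Submodule.span ℝ {v} := hyv
    obtain ⟨c, rfl⟩ := Submodule.mem_span_singleton.1 hyv'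
    have happ : f0 ⟨c • v, hyv⟩ = c * N v := by
      have h := LinearPMap.mkSpanSingleton'_apply v (N v) _ c hyv
      rw [smul_eq_mul] at h
      exact h
    rw [happ]
    rcases lt_trichotomy c 0 with h | h | h
    · have hcv : c • v = (-c) • (-v) := by simp
      have : N (c • v) = (-c) * N (-v) := by
        rw [hcv, N_hom (-c) (neg_pos.2 h) (-v)]
      rw [show ((⟨c • v, hyv⟩ : f0.domain) : E) = c • v from rfl, this]
      nlinarith
    · subst h
      simp only [zero_smul, zero_mul]
      exact (clarkeDeriv_zero z).ge
    · rw [show ((⟨c • v, hyv⟩ : f0.domain) : E) = c • v from rfl, N_hom c h v]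
  obtain ⟨g, hg1, hg2⟩ := exists_extension_of_le_sublinear f0 N N_hom N_add hf0le
  set s : E := (InnerProductSpace.toDual ℝ (EuclideanSpace ℝ (Fin d))).symm
    (LinearMap.toContinuousLinearMap g) with hs
  have hsw : ∀ w : E, ⟪s, w⟫_ℝ = g w := by
    intro w
    rw [hs]
    exact InnerProductSpace.toDual_symm_apply
  have hmem : s ∈ clarkeSubdiff f z := by
    intro w
    rw [hsw w]
    exact hg2 w
  have hnorm : ‖s‖ ≤ R1 * ‖z‖ ^ m + R2 := hf.2.2.2.2 z s hmem
  have hNv : N v = ⟪s, v⟫_ℝ := by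
    rw [hsw v]
    have h := hg1 ⟨v, Submodule.mem_span_singleton_self v⟩
    rw [h, LinearPMap.mkSpanSingleton_apply]
  calc N v = ⟪s, v⟫_ℝ := hNv
  _ ≤ ‖s‖ * ‖v‖ := real_inner_le_norm s v
  _ ≤ (R1 * ‖z‖ ^ m + R2) * ‖v‖ := mul_le_mul_of_nonneg_right hnorm (norm_nonneg v)


lemma segment_bound {R1 R2 : ℝ} {m : ℕ} (hf : IsSPB f R1 R2 m) (x v : E) {C : ℝ}
    (hC : ∀ t ∈ Icc (0:ℝ) 1, R1 * ‖x + t • v‖ ^ m + R2 ≤ C) :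
    f (x + v) - f x ≤ C * ‖v‖ := by
  set g : ℝ → ℝ := fun t => f (x + t • v) with hg
  have hcont : Continuous g :=
    hf.1.continuous.comp (continuous_const.add (continuous_id.smul continuous_const))
  have hB : ∀ t : ℝ, HasDerivAt (fun t : ℝ => g 0 + C * ‖v‖ * t) (C * ‖v‖) t := by
    intro t
    simpa using ((hasDerivAt_id t).const_mul (C * ‖v‖)).const_add (g 0)
  have bound : ∀ t ∈ Ico (0:ℝ) 1, ∀ r, C * ‖v‖ < r → ∃ᶠ z in 𝓝[>] t, slope g t z < r := by
    intro t ht r hr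
    set p : E := x + t • v with hp
    set u : E × ℝ → ℝ := fun q => (f (q.1 + q.2 • v) - f q.1) / q.2 with hu
    set j : ℝ → E × ℝ := fun s => (p, s) with hj
    have hjt : Tendsto j (𝓝[>] (0:ℝ)) (𝓝 p ×ˢ 𝓝[>] (0:ℝ)) :=
      tendsto_const_nhds.prodMk tendsto_id
    obtain ⟨K, hK0, hK⟩ := exists_abs_bound hf.1 p v
    have hbdd : ∀ᶠ s in 𝓝[>] (0:ℝ), |u (j s)| ≤ K := hjt.eventually hK
    have hlimsup : limsup (u ∘ j) (𝓝[>] (0:ℝ)) ≤ clarkeDeriv f p v := by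
      rw [limsup_comp]
      refine limsup_le_limsup_of_le hjt ?_ (bdd_of_abs hK).1
      show IsCobounded _ (map u (map j _))
      rw [map_map]
      exact (bdd_of_abs hbdd).2.isCoboundedUnder_le
    have hlt : limsup (u ∘ j) (𝓝[>] (0:ℝ)) < r := by
      have h1 : clarkeDeriv f p v ≤ (R1 * ‖p‖ ^ m + R2) * ‖v‖ := clarkeDeriv_le_norm hf p v
      have h2 : (R1 * ‖p‖ ^ m + R2) * ‖v‖ ≤ C * ‖v‖ :=
        mul_le_mul_of_nonneg_right (hC t (Ico_subset_Icc_self ht)) (norm_nonneg v)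
      exact lt_of_le_of_lt (hlimsup.trans (h1.trans h2)) hr
    have hev : ∀ᶠ s in 𝓝[>] (0:ℝ), u (j s) < r :=
      eventually_lt_of_limsup_lt hlt (bdd_of_abs hbdd).1
    have hsub : Tendsto (fun z : ℝ => z - t) (𝓝[>] t) (𝓝[>] (0:ℝ)) := by
      apply tendsto_nhdsWithin_of_tendsto_nhds_of_eventually_within
      · have : Tendsto (fun z : ℝ => z - t) (𝓝 t) (𝓝 (t - t)) :=
          (continuous_id.sub continuous_const).tendsto t
        rw [sub_self] at this
        exact this.mono_left nhdsWithin_le_nhds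
      · exact eventually_mem_nhdsWithin.mono fun z hz => Set.mem_Ioi.2 (sub_pos.2 hz)
    have hfreq : ∀ᶠ z in 𝓝[>] t, u (j (z - t)) < r := hsub.eventually hev
    refine hfreq.frequently.mono fun z hz => ?_
    have hxz : x + z • v = p + (z - t) • v := by
      rw [hp, add_assoc, ← add_smul]
      congr 1
      ring_nf
    have hslope : slope g t z = u (j (z - t)) := by
      rw [slope_def_field]
      simp only [hu, hj, hg]
      rw [hxz, ← hp]
    rw [hslope]
    exact hz
  have key := image_le_of_liminf_slope_right_le_deriv_boundary
    (f := g) (a := 0) (b := 1) (B := fun t : ℝ => g 0 + C * ‖v‖ * t)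
    (B' := fun _ : ℝ => C * ‖v‖) hcont.continuousOn
    (by simp)
    ((continuous_const.add (continuous_const.mul continuous_id)).continuousOn)
    (fun t _ => (hB t).hasDerivWithinAt)
    bound
  have h1 := key (right_mem_Icc.2 zero_le_one)
  have hg1 : g 1 = f (x + v) := by rw [hg]; simp
  have hg0 : g 0 = f x := by rw [hg]; simp
  rw [hg1, hg0] at h1
  simp only [mul_one] at h1
  linarith


lemma half_bound {R1 R2 : ℝ} {m : ℕ} (hf : IsSPB f R1 R2 m) (x y : E) :
    ∀ t ∈ Icc (0:ℝ) 1, R1 * ‖x + t • (y - x)‖ ^ m + R2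
      ≤ R1 * (‖x‖ + ‖y - x‖) ^ m + R2 := by
  intro t ht
  have hn : ‖x + t • (y - x)‖ ≤ ‖x‖ + ‖y - x‖ := by
    calc ‖x + t • (y - x)‖ ≤ ‖x‖ + ‖t • (y - x)‖ := norm_add_le _ _
    _ ≤ ‖x‖ + ‖y - x‖ := by
        refine add_le_add le_rfl ?_
        rw [norm_smul, Real.norm_eq_abs, abs_of_nonneg ht.1]
        exact mul_le_of_le_one_left (norm_nonneg _) ht.2
  have hpow := pow_le_pow_left₀ (norm_nonneg _) hn m
  have := mul_le_mul_of_nonneg_left hpow hf.2.1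
  linarith

theorem spb_growth_estimate' {R1 R2 : ℝ} {m : ℕ} (hf : IsSPB f R1 R2 m) (x y : E) :
    |f x - f y| ≤ ((2 : ℝ) ^ ((m : ℤ) - 1) * R1 * ‖x‖ ^ m
      + (2 : ℝ) ^ ((m : ℤ) - 1) * R1 * ‖y - x‖ ^ m + R2) * ‖x - y‖ := by
  set C : ℝ := R1 * (‖x‖ + ‖y - x‖) ^ m + R2 with hCdef
  have hxy : ‖x - y‖ = ‖y - x‖ := norm_sub_rev x y
  have h1 : f y - f x ≤ C * ‖y - x‖ := by
    have h := segment_bound hf x (y - x) (half_bound hf x y)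
    simpa using h
  have h2 : f x - f y ≤ C * ‖x - y‖ := by
    have hb : ∀ t ∈ Icc (0:ℝ) 1, R1 * ‖y + t • (x - y)‖ ^ m + R2 ≤ C := by
      intro t ht
      have hyz : y + t • (x - y) = x + (1 - t) • (y - x) := by
        rw [sub_smul, one_smul, smul_sub, smul_sub]
        abel
      rw [hyz]
      exact half_bound hf x y (1 - t) ⟨by linarith [ht.2], by linarith [ht.1]⟩
    have h := segment_bound hf y (x - y) hb
    simpa using h
  have habs : |f x - f y| ≤ C * ‖x - y‖ := by
    rw [abs_sub_le_iff]
    exact ⟨h2, by rw [hxy]; exact h1⟩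
  refine habs.trans (mul_le_mul_of_nonneg_right ?_ (norm_nonneg _))
  rw [hCdef]
  rcases Nat.eq_zero_or_pos m with hm | hm
  · have hR1 : R1 = 0 := hf.2.2.2.1.2 hm
    subst hm
    simp [hR1]
  · obtain ⟨k, rfl⟩ : ∃ k, m = k + 1 := ⟨m - 1, (Nat.succ_pred_eq_of_pos hm).symm⟩
    have hzp : (2 : ℝ) ^ (((k + 1 : ℕ) : ℤ) - 1) = (2 : ℝ) ^ (k : ℕ) := by
      have : ((k + 1 : ℕ) : ℤ) - 1 = (k : ℤ) := by push_cast; ring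
      rw [this, zpow_natCast]
    rw [hzp]
    have hap := add_pow_le (norm_nonneg x) (norm_nonneg (y - x)) (k + 1)
    have : (k + 1) - 1 = k := rfl
    rw [this] at hap
    have := mul_le_mul_of_nonneg_left hap hf.2.1
    nlinarith [hf.2.1, pow_nonneg (norm_nonneg x) (k+1), pow_nonneg (norm_nonneg (y-x)) (k+1)]

end Aux

/-- Lemma 3.3 of the paper. If `f` is SPB with parameters `R₁, R₂, m`,
then `|f x - f y| ≤ (2^{m-1} R₁ ‖x‖^m + 2^{m-1} R₁ ‖y - x‖^m + R₂) ‖x - y‖`. -/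
theorem spb_growth_estimate {d : ℕ} (hd : 1 ≤ d) (f : EuclideanSpace ℝ (Fin d) → ℝ)
    (R1 R2 : ℝ) (m : ℕ) (hf : IsSPB f R1 R2 m) (x y : EuclideanSpace ℝ (Fin d)) :
    |f x - f y| ≤ ((2 : ℝ) ^ ((m : ℤ) - 1) * R1 * ‖x‖ ^ m
      + (2 : ℝ) ^ ((m : ℤ) - 1) * R1 * ‖y - x‖ ^ m + R2) * ‖x - y‖ :=
  spb_growth_estimate' hf x y
end

section
/- Let d ≥ 1 be an integer, ν > 0 and M ≥ 0. Assume that either ν ≥ (2π)^{d/2}, or M ≥ √d and (M²/d)·e^{1 − M²/d} ≤ ν^{2/d}/(2π). Then the Lebesgue integral of e^{−‖u‖²/2} over the region {u ∈ ℝ^d : ‖u‖ ≥ M} is at most ν. (This is the Lambert-W-free form of the paper's Lemma 3.6: the stated conditions are exactly what the hypothesis M ≥ [−d·W₋₁(−ν^{2/d}/(2πe))]^{1/2} unwinds to.) -/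
open MeasureTheory Filter Set
open scoped InnerProductSpace ENNReal Topology Real NNReal

lemma gaussian_tail_aux {d : ℕ} (M s c : ℝ) (hs : 0 < s)
    (hle : ∀ u : EuclideanSpace ℝ (Fin d), M ≤ ‖u‖ → -‖u‖ ^ 2 / 2 ≤ c - s * ‖u‖ ^ 2) :
    (∫⁻ u in {u : EuclideanSpace ℝ (Fin d) | M ≤ ‖u‖},
      ENNReal.ofReal (Real.exp (-‖u‖ ^ 2 / 2)))
      ≤ ENNReal.ofReal (Real.exp c * (π / s) ^ ((d : ℝ) / 2)) := by
  have hint : Integrable (fun u : EuclideanSpace ℝ (Fin d) ↦ Real.exp c * Real.exp (-s * ‖u‖ ^ 2)) := by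
    apply Integrable.const_mul
    have := (GaussianFourier.integrable_cexp_neg_mul_sq_norm_add
      (V := EuclideanSpace ℝ (Fin d)) (b := (s : ℂ)) (by simpa using hs) 0 0).norm
    simpa [Complex.norm_exp, ← Complex.ofReal_pow] using this
  have h1 : (∫⁻ u in {u : EuclideanSpace ℝ (Fin d) | M ≤ ‖u‖},
      ENNReal.ofReal (Real.exp (-‖u‖ ^ 2 / 2)))
      ≤ ∫⁻ u : EuclideanSpace ℝ (Fin d),
        ENNReal.ofReal (Real.exp c * Real.exp (-s * ‖u‖ ^ 2)) := by
    refine le_trans (setLIntegral_mono ?_ ?_) (setLIntegral_le_lintegral _ _)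
    · exact (Measurable.const_mul (by fun_prop) _).ennreal_ofReal
    · intro u hu
      apply ENNReal.ofReal_le_ofReal
      rw [← Real.exp_add]
      exact Real.exp_le_exp.2 (by simpa [sub_eq_add_neg, neg_mul] using hle u hu)
  refine h1.trans (le_of_eq ?_)
  rw [← ofReal_integral_eq_lintegral_ofReal hint
    (Filter.Eventually.of_forall fun u ↦ by positivity)]
  congr 1
  rw [integral_const_mul, GaussianFourier.integral_rexp_neg_mul_sq_norm hs,
    finrank_euclideanSpace_fin]

/-- Lemma 3.6, Lambert-W-free form. Gaussian tail bound:
if either `ν ≥ (2π)^{d/2}`, or `M ≥ √d` and `(M²/d) e^{1 - M²/d} ≤ ν^{2/d}/(2π)`, then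
`∫_{‖u‖ ≥ M} e^{-‖u‖²/2} du ≤ ν`. -/
theorem gaussian_tail_bound {d : ℕ} (hd : 1 ≤ d) (ν M : ℝ) (hν : 0 < ν) (hM : 0 ≤ M)
    (h : (2 * π) ^ ((d : ℝ) / 2) ≤ ν ∨
      (Real.sqrt d ≤ M ∧ M ^ 2 / d * Real.exp (1 - M ^ 2 / d) ≤ ν ^ ((2 : ℝ) / d) / (2 * π))) :
    (∫⁻ u in {u : EuclideanSpace ℝ (Fin d) | M ≤ ‖u‖},
      ENNReal.ofReal (Real.exp (-‖u‖ ^ 2 / 2))) ≤ ENNReal.ofReal ν := by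
  have hπ : (0 : ℝ) < π := Real.pi_pos
  have hd' : (1 : ℝ) ≤ (d : ℝ) := by exact_mod_cast hd
  have hd0 : (0 : ℝ) < d := by linarith
  rcases h with h | ⟨h1, h2⟩
  · refine (gaussian_tail_aux M (1/2) 0 (by norm_num) fun u _ ↦ by ring_nf; exact le_refl _).trans ?_
    apply ENNReal.ofReal_le_ofReal
    rw [Real.exp_zero, one_mul]
    have : π / (1/2 : ℝ) = 2 * π := by ring
    rw [this]; exact h
  · -- hard case
    have hM1 : (1 : ℝ) ≤ M := le_trans (by
      rw [show (1:ℝ) = Real.sqrt 1 by simp]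
      exact Real.sqrt_le_sqrt hd') h1
    have hMpos : (0 : ℝ) < M := by linarith
    have hdM : (d : ℝ) ≤ M ^ 2 := by
      have := Real.sq_sqrt (le_trans zero_le_one hd')
      nlinarith [Real.sq_sqrt (le_trans zero_le_one hd'), Real.sqrt_nonneg (d : ℝ)]
    set s : ℝ := d / (2 * M ^ 2) with hs_def
    have hs : 0 < s := by positivity
    have key : ∀ u : EuclideanSpace ℝ (Fin d), M ≤ ‖u‖ →
        -‖u‖ ^ 2 / 2 ≤ -(M ^ 2 - d) / 2 - s * ‖u‖ ^ 2 := by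
      intro u hu
      have hx : M ^ 2 ≤ ‖u‖ ^ 2 := by nlinarith [norm_nonneg u]
      have h2M : (0:ℝ) < 2 * M ^ 2 := by positivity
      refine (mul_le_mul_iff_of_pos_right h2M).1 ?_
      have hss : s * (2 * M ^ 2) = (d : ℝ) := by rw [hs_def]; field_simp
      have hring : (-(M ^ 2 - (d : ℝ)) / 2 - s * ‖u‖ ^ 2) * (2 * M ^ 2)
          = -(M ^ 2 - (d : ℝ)) / 2 * (2 * M ^ 2) - s * (2 * M ^ 2) * ‖u‖ ^ 2 := by ring
      rw [hring, hss]
      nlinarith [mul_nonneg (sub_nonneg.2 hdM) (sub_nonneg.2 hx)]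
    refine (gaussian_tail_aux M s (-(M ^ 2 - d) / 2) hs key).trans ?_
    apply ENNReal.ofReal_le_ofReal
    have hps : π / s = 2 * π * (M ^ 2 / d) := by
      rw [hs_def]; field_simp
    rw [hps]
    have hexp : Real.exp (-(M ^ 2 - d) / 2) = Real.exp (1 - M ^ 2 / d) ^ ((d : ℝ) / 2) := by
      rw [← Real.exp_mul]
      congr 1
      field_simp
      ring
    rw [hexp, ← Real.mul_rpow (Real.exp_nonneg _) (by positivity)]
    calc (Real.exp (1 - M ^ 2 / d) * (2 * π * (M ^ 2 / d))) ^ ((d : ℝ) / 2)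
        ≤ (ν ^ ((2 : ℝ) / d)) ^ ((d : ℝ) / 2) := by
          apply Real.rpow_le_rpow (by positivity) ?_ (by positivity)
          have : ν ^ ((2 : ℝ) / d) = 2 * π * (ν ^ ((2 : ℝ) / d) / (2 * π)) := by
            field_simp
          rw [this]
          nlinarith [Real.exp_nonneg (1 - M ^ 2 / d)]
      _ = ν := by
          rw [← Real.rpow_mul hν.le]
          rw [show (2 : ℝ) / d * ((d : ℝ) / 2) = 1 by field_simp]
          exact Real.rpow_one ν
end

section
/- Let (X, 𝒜, P) be a probability space, ξ : X → ℝ^d a measurable map, g : ℝ^d → [0,∞) a lower semicontinuous function, n ≥ 1 an integer, and α_c, β_c > 0. Assume ∫ ‖ξ‖² dP ≤ β_c and ∫ g(ξ)/(1 + ‖ξ‖^n) dP ≤ α_c. Then ∫ g(ξ)^{1/(2⌈n/2⌉)} dP ≤ (1 + √β_c) (2α_c)^{1/(2⌈n/2⌉)}, where all integrals are Lebesgue integrals of nonnegative functions (valued in [0,∞]) and ⌈·⌉ denotes the ceiling. -/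
open MeasureTheory Filter Set
open scoped InnerProductSpace ENNReal Topology Real NNReal

lemma aux_pow_bd (m n : ℕ) (hm : 1 ≤ m) (hnm : n ≤ 2*m) (t : ℝ) (ht : 0 ≤ t) :
    (1 + t^n) ^ ((1:ℝ)/(2*(m:ℝ))) ≤ 2 ^ ((1:ℝ)/(2*(m:ℝ))) * (1 + t) := by
  have hm0 : (m:ℝ) ≠ 0 := by positivity
  have hp0 : (0:ℝ) ≤ 1/(2*(m:ℝ)) := by positivity
  set s := max 1 t with hs
  have hs1 : (1:ℝ) ≤ s := le_max_left 1 t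
  have hs0 : (0:ℝ) ≤ s := by linarith
  have h1 : 1 + t^n ≤ 2 * s^(2*m) := by
    have ht1 : t^n ≤ s^(2*m) :=
      (pow_le_pow_left₀ ht (le_max_right 1 t) n).trans (pow_le_pow_right₀ hs1 hnm)
    have h2 : (1:ℝ) ≤ s^(2*m) := one_le_pow₀ hs1
    linarith
  have h3 := Real.rpow_le_rpow (by positivity) h1 hp0
  have h4 : (2 * s^(2*m)) ^ ((1:ℝ)/(2*(m:ℝ))) = 2 ^ ((1:ℝ)/(2*(m:ℝ))) * s := by
    rw [Real.mul_rpow (by norm_num) (by positivity), ← Real.rpow_natCast s (2*m),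
      ← Real.rpow_mul hs0]
    congr 1
    rw [show ((2*m : ℕ):ℝ) * (1/(2*(m:ℝ))) = 1 by push_cast; field_simp]
    exact Real.rpow_one s
  rw [h4] at h3
  refine h3.trans ?_
  have : s ≤ 1 + t := by simp [hs, max_le_iff]; linarith
  have h2p : (0:ℝ) ≤ 2 ^ ((1:ℝ)/(2*(m:ℝ))) := by positivity
  nlinarith

/-- Lemma 4.4. If `E[‖ξ‖²] ≤ β_c` and `E[g(ξ)/(1 + ‖ξ‖^n)] ≤ α_c`, then
`E[g(ξ)^{1/(2⌈n/2⌉)}] ≤ (1 + √β_c) (2α_c)^{1/(2⌈n/2⌉)}`. -/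
theorem moment_transfer_lemma {X : Type*} [MeasurableSpace X] (P : Measure X)
    [IsProbabilityMeasure P] {d : ℕ} (hd : 1 ≤ d) (ξ : X → EuclideanSpace ℝ (Fin d))
    (hξ : Measurable ξ) (g : EuclideanSpace ℝ (Fin d) → ℝ) (hg0 : ∀ y, 0 ≤ g y)
    (hg : LowerSemicontinuous g) (n : ℕ) (hn : 1 ≤ n) (αc βc : ℝ) (hαc : 0 < αc)
    (hβc : 0 < βc)
    (h1 : (∫⁻ ω, ENNReal.ofReal (‖ξ ω‖ ^ 2) ∂P) ≤ ENNReal.ofReal βc)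
    (h2 : (∫⁻ ω, ENNReal.ofReal (g (ξ ω) / (1 + ‖ξ ω‖ ^ n)) ∂P) ≤ ENNReal.ofReal αc) :
    (∫⁻ ω, ENNReal.ofReal (g (ξ ω) ^ ((1 : ℝ) / (2 * (⌈(n : ℝ) / 2⌉₊ : ℝ)))) ∂P)
      ≤ ENNReal.ofReal ((1 + Real.sqrt βc)
          * (2 * αc) ^ ((1 : ℝ) / (2 * (⌈(n : ℝ) / 2⌉₊ : ℝ)))) := by
  set m : ℕ := ⌈(n : ℝ) / 2⌉₊ with hm_def
  have hm1 : 1 ≤ m := Nat.ceil_pos.mpr (by positivity)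
  have hmR : (1:ℝ) ≤ (m:ℝ) := by exact_mod_cast hm1
  have hnm : n ≤ 2 * m := by
    have h := Nat.le_ceil ((n:ℝ)/2)
    have : (n:ℝ) ≤ 2 * (m:ℝ) := by rw [hm_def]; linarith
    exact_mod_cast this
  set p : ℝ := (1:ℝ) / (2 * (m:ℝ)) with hp_def
  have hp0 : 0 < p := by positivity
  have hp_half : p ≤ 1/2 := by
    rw [hp_def]
    rw [div_le_div_iff₀ (by positivity) (by norm_num)]
    linarith
  have hp1 : p ≤ 1 := by linarith
  have h1p : 0 < 1 - p := by linarith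
  set q : ℝ := 1 / (1 - p) with hq_def
  have hq0 : 0 < q := by positivity
  have hq2 : q ≤ 2 := by
    rw [hq_def, div_le_iff₀ h1p]; linarith
  have hq1p : q * (1 - p) = 1 := by rw [hq_def]; field_simp
  -- measurable pieces
  have hgm : Measurable g := hg.measurable
  have hNr : Measurable fun ω => ‖ξ ω‖ := hξ.norm
  set H : X → ℝ≥0∞ := fun ω => ENNReal.ofReal (g (ξ ω) / (1 + ‖ξ ω‖ ^ n)) with hH_def
  set N : X → ℝ≥0∞ := fun ω => ENNReal.ofReal ‖ξ ω‖ with hN_def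
  have hHm : Measurable H := ((hgm.comp hξ).div ((hNr.pow_const n).const_add 1)).ennreal_ofReal
  have hNm : Measurable N := hNr.ennreal_ofReal
  have hden : ∀ ω, (0:ℝ) < 1 + ‖ξ ω‖ ^ n := fun ω => by positivity
  -- pointwise bound
  have hpt : ∀ ω, ENNReal.ofReal (g (ξ ω) ^ p)
      ≤ ENNReal.ofReal (2 ^ p) * (H ω ^ p * (1 + N ω)) := by
    intro ω
    set t := ‖ξ ω‖ with ht_def
    have ht0 : 0 ≤ t := norm_nonneg _
    have hreal : g (ξ ω) ^ p ≤ (g (ξ ω) / (1 + t ^ n)) ^ p * (2 ^ p * (1 + t)) := by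
      have hdnn : (0:ℝ) ≤ g (ξ ω) / (1 + t ^ n) := div_nonneg (hg0 _) (hden ω).le
      have hsplit : g (ξ ω) ^ p = (g (ξ ω) / (1 + t ^ n)) ^ p * (1 + t ^ n) ^ p := by
        rw [← Real.mul_rpow hdnn (by positivity),
          div_mul_cancel₀ _ (hden ω).ne']
      rw [hsplit]
      exact mul_le_mul_of_nonneg_left (aux_pow_bd m n hm1 hnm t ht0)
        (Real.rpow_nonneg hdnn _)
    calc ENNReal.ofReal (g (ξ ω) ^ p)
        ≤ ENNReal.ofReal ((g (ξ ω) / (1 + t ^ n)) ^ p * (2 ^ p * (1 + t))) :=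
          ENNReal.ofReal_le_ofReal hreal
      _ = ENNReal.ofReal (2 ^ p) * (H ω ^ p * (1 + N ω)) := by
          have hdnn : (0:ℝ) ≤ g (ξ ω) / (1 + t ^ n) := div_nonneg (hg0 _) (hden ω).le
          rw [ENNReal.ofReal_mul (Real.rpow_nonneg hdnn _), ENNReal.ofReal_mul (by positivity),
            ENNReal.ofReal_add (by norm_num) ht0, ENNReal.ofReal_one,
            ← ENNReal.ofReal_rpow_of_nonneg hdnn hp0.le]
          ring
  -- Jensen : ∫ H^p ≤ (∫ H)^p
  have jensen : ∀ (f : X → ℝ≥0∞), Measurable f → ∀ r : ℝ, 0 ≤ r → r ≤ 1 →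
      (∫⁻ ω, f ω ^ r ∂P) ≤ (∫⁻ ω, f ω ∂P) ^ r := by
    intro f hf r hr0 hr1
    have := ENNReal.lintegral_mul_norm_pow_le (μ := P) (p := r) (q := 1 - r) hf.aemeasurable
      (aemeasurable_const (b := (1:ℝ≥0∞))) hr0 (by linarith) (by ring)
    simpa using this
  have J1 : (∫⁻ ω, H ω ^ p ∂P) ≤ (ENNReal.ofReal αc) ^ p :=
    ((jensen H hHm p hp0.le hp1).trans (ENNReal.rpow_le_rpow h2 hp0.le))
  -- Hölder term
  have JN2 : (∫⁻ ω, N ω ^ (2:ℝ) ∂P) ≤ ENNReal.ofReal βc := by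
    refine le_trans (le_of_eq ?_) h1
    refine lintegral_congr fun ω => ?_
    rw [hN_def]
    rw [ENNReal.ofReal_rpow_of_nonneg (norm_nonneg (ξ ω)) (by norm_num : (0:ℝ) ≤ 2)]
    congr 1
    rw [← Real.rpow_natCast ‖ξ ω‖ 2]
    norm_num
  have JNq : (∫⁻ ω, N ω ^ q ∂P) ≤ (ENNReal.ofReal βc) ^ (q/2) := by
    have heq : ∀ ω, N ω ^ q = (N ω ^ (2:ℝ)) ^ (q/2) := by
      intro ω; rw [← ENNReal.rpow_mul]; congr 1; ring
    calc (∫⁻ ω, N ω ^ q ∂P) = ∫⁻ ω, (N ω ^ (2:ℝ)) ^ (q/2) ∂P := lintegral_congr heq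
      _ ≤ (∫⁻ ω, N ω ^ (2:ℝ) ∂P) ^ (q/2) :=
          jensen _ (hNm.pow_const _) _ (by positivity) (by linarith)
      _ ≤ (ENNReal.ofReal βc) ^ (q/2) := ENNReal.rpow_le_rpow JN2 (by positivity)
  have J2 : (∫⁻ ω, H ω ^ p * N ω ∂P)
      ≤ (ENNReal.ofReal αc) ^ p * ENNReal.ofReal (Real.sqrt βc) := by
    have hNrw : ∀ ω, N ω = (N ω ^ q) ^ (1 - p) := by
      intro ω; rw [← ENNReal.rpow_mul, hq1p, ENNReal.rpow_one]
    calc (∫⁻ ω, H ω ^ p * N ω ∂P)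
        = ∫⁻ ω, H ω ^ p * (N ω ^ q) ^ (1 - p) ∂P := by
          refine lintegral_congr fun ω => by rw [← hNrw ω]
      _ ≤ (∫⁻ ω, H ω ∂P) ^ p * (∫⁻ ω, N ω ^ q ∂P) ^ (1 - p) :=
          ENNReal.lintegral_mul_norm_pow_le hHm.aemeasurable (hNm.pow_const _).aemeasurable
            hp0.le h1p.le (by ring)
      _ ≤ (ENNReal.ofReal αc) ^ p * ((ENNReal.ofReal βc) ^ (q/2)) ^ (1 - p) := by
          gcongr
      _ = (ENNReal.ofReal αc) ^ p * ENNReal.ofReal (Real.sqrt βc) := by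
          congr 1
          rw [← ENNReal.rpow_mul]
          rw [show q / 2 * (1 - p) = 1/2 by rw [div_mul_eq_mul_div, hq1p]]
          rw [ENNReal.ofReal_rpow_of_pos hβc, ← Real.sqrt_eq_rpow]
  -- assemble
  calc (∫⁻ ω, ENNReal.ofReal (g (ξ ω) ^ p) ∂P)
      ≤ ∫⁻ ω, ENNReal.ofReal (2 ^ p) * (H ω ^ p * (1 + N ω)) ∂P :=
        lintegral_mono hpt
    _ = ENNReal.ofReal (2 ^ p) * ((∫⁻ ω, H ω ^ p ∂P) + ∫⁻ ω, H ω ^ p * N ω ∂P) := by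
        rw [lintegral_const_mul _ (f := fun ω => H ω ^ p * (1 + N ω)) ((hHm.pow_const p).mul (hNm.const_add 1)), ← lintegral_add_left (hHm.pow_const p)]
        congr 1
        exact lintegral_congr fun ω => by ring
    _ ≤ ENNReal.ofReal (2 ^ p) * ((ENNReal.ofReal αc) ^ p
          + (ENNReal.ofReal αc) ^ p * ENNReal.ofReal (Real.sqrt βc)) := by
        gcongr
    _ = ENNReal.ofReal ((1 + Real.sqrt βc) * (2 * αc) ^ p) := by
        rw [ENNReal.ofReal_mul (by positivity), Real.mul_rpow (by norm_num) hαc.le,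
          ENNReal.ofReal_mul (by positivity),
          ← ENNReal.ofReal_rpow_of_pos hαc, ← ENNReal.ofReal_rpow_of_pos (by norm_num : (0:ℝ) < 2),
          ENNReal.ofReal_add (by norm_num) (Real.sqrt_nonneg _), ENNReal.ofReal_one]
        ring
end
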